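/- Let A be an m×n real matrix satisfying the RIP of order t with constant δ_t, let μ > 0, let q ∈ ℝⁿ and U ⊆ {1,…,n} with |U ∪ supp(q)| ≤ t. Then ‖((I − μAᵀA)q)_U‖₂ ≤ (|μ−1| + μδ_t)·‖q‖₂. -/
import Mathlib


open Finset Matrix

/-- Euclidean norm of a finitely-indexed real vector. -/
noncomputable def nrm {ι : Type*} [Fintype ι] (x : ι → ℝ) : ℝ :=
  Real.sqrt (∑ i, x i ^ 2)

open Classical in
/-- Support of a vector as a finite set of indices. -/
noncomputable def spt {n : ℕ} (x : Fin n → ℝ) : Finset (Fin n) :=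
  Finset.univ.filter fun i => x i ≠ 0

/-- Restriction of a vector to an index set: keep entries in `U`, zero the rest. -/
def restr {n : ℕ} (x : Fin n → ℝ) (U : Finset (Fin n)) : Fin n → ℝ :=
  fun i => if i ∈ U then x i else 0

/-- `A` satisfies the RIP of order `t` with constant `δ`. -/
def RIP {m n : ℕ} (A : Matrix (Fin m) (Fin n) ℝ) (t : ℕ) (δ : ℝ) : Prop :=
  ∀ x : Fin n → ℝ, (spt x).card ≤ t →
    (1 - δ) * nrm x ^ 2 ≤ nrm (A.mulVec x) ^ 2 ∧
      nrm (A.mulVec x) ^ 2 ≤ (1 + δ) * nrm x ^ 2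

lemma nrm_nonneg {ι : Type*} [Fintype ι] (x : ι → ℝ) : 0 ≤ nrm x := Real.sqrt_nonneg _

lemma nrm_sq {ι : Type*} [Fintype ι] (x : ι → ℝ) : nrm x ^ 2 = ∑ i, x i ^ 2 :=
  Real.sq_sqrt (Finset.sum_nonneg fun i _ => sq_nonneg _)

lemma nrm_pos {ι : Type*} [Fintype ι] (x : ι → ℝ) (hx : x ≠ 0) : 0 < nrm x := by
  have h : ∃ i, x i ≠ 0 := by
    by_contra h; push_neg at h; exact hx (funext h)
  obtain ⟨i, hi⟩ := h
  apply Real.sqrt_pos.2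
  apply Finset.sum_pos' (fun j _ => sq_nonneg _) ⟨i, Finset.mem_univ i, by positivity⟩

lemma nrm_smul {ι : Type*} [Fintype ι] (c : ℝ) (x : ι → ℝ) : nrm (c • x) = |c| * nrm x := by
  unfold nrm
  rw [← Real.sqrt_sq_eq_abs, ← Real.sqrt_mul (sq_nonneg c), Finset.mul_sum]
  congr 1
  exact Finset.sum_congr rfl fun i _ => by simp only [Pi.smul_apply, smul_eq_mul]; ring

lemma nrm_add_sq {ι : Type*} [Fintype ι] (x y : ι → ℝ) :
    nrm (x + y) ^ 2 = nrm x ^ 2 + 2 * ∑ i, x i * y i + nrm y ^ 2 := by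
  simp only [nrm_sq, Pi.add_apply, Finset.mul_sum]
  rw [← Finset.sum_add_distrib, ← Finset.sum_add_distrib]
  exact Finset.sum_congr rfl fun i _ => by ring

lemma nrm_sub_sq {ι : Type*} [Fintype ι] (x y : ι → ℝ) :
    nrm (x - y) ^ 2 = nrm x ^ 2 - 2 * ∑ i, x i * y i + nrm y ^ 2 := by
  simp only [nrm_sq, Pi.sub_apply, Finset.mul_sum]
  rw [← Finset.sum_sub_distrib, ← Finset.sum_add_distrib]
  exact Finset.sum_congr rfl fun i _ => by ring

lemma spt_add_subset {n : ℕ} (x y : Fin n → ℝ) : spt (x + y) ⊆ spt x ∪ spt y := by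
  intro i hi
  simp only [spt, Finset.mem_filter, Finset.mem_univ, true_and, Pi.add_apply] at hi ⊢
  simp only [Finset.mem_union, Finset.mem_filter, Finset.mem_univ, true_and]
  by_contra h; push_neg at h; rw [h.1, h.2] at hi; simp at hi

lemma spt_sub_subset {n : ℕ} (x y : Fin n → ℝ) : spt (x - y) ⊆ spt x ∪ spt y := by
  intro i hi
  simp only [spt, Finset.mem_filter, Finset.mem_univ, true_and, Pi.sub_apply] at hi ⊢
  simp only [Finset.mem_union, Finset.mem_filter, Finset.mem_univ, true_and]
  by_contra h; push_neg at h; rw [h.1, h.2] at hi; simp at hi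

lemma spt_smul_subset {n : ℕ} (c : ℝ) (x : Fin n → ℝ) : spt (c • x) ⊆ spt x := by
  intro i hi
  simp only [spt, Finset.mem_filter, Finset.mem_univ, true_and, Pi.smul_apply,
    smul_eq_mul] at hi ⊢
  exact fun h => hi (by rw [h, mul_zero])

/-- normalized RIP inner-product bound -/
lemma rip_dot_unit {m n : ℕ} {A : Matrix (Fin m) (Fin n) ℝ} {t : ℕ} {δ : ℝ}
    (hRIP : RIP A t δ) (x y : Fin n → ℝ) (hcard : (spt x ∪ spt y).card ≤ t)
    (hx : nrm x = 1) (hy : nrm y = 1) :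
    |(∑ i, (A.mulVec x) i * (A.mulVec y) i) - ∑ i, x i * y i| ≤ δ := by
  have hc1 : (spt (x + y)).card ≤ t :=
    le_trans (Finset.card_le_card (spt_add_subset x y)) hcard
  have hc2 : (spt (x - y)).card ≤ t :=
    le_trans (Finset.card_le_card (spt_sub_subset x y)) hcard
  have h1 := hRIP (x + y) hc1
  have h2 := hRIP (x - y) hc2
  rw [Matrix.mulVec_add] at h1
  rw [Matrix.mulVec_sub] at h2
  rw [nrm_add_sq, nrm_add_sq] at h1
  rw [nrm_sub_sq, nrm_sub_sq] at h2
  rw [hx, hy] at h1 h2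
  rw [abs_le]
  constructor <;> nlinarith [h1.1, h1.2, h2.1, h2.2]

lemma rip_dot {m n : ℕ} {A : Matrix (Fin m) (Fin n) ℝ} {t : ℕ} {δ : ℝ}
    (hRIP : RIP A t δ) (x y : Fin n → ℝ) (hcard : (spt x ∪ spt y).card ≤ t) :
    |(∑ i, (A.mulVec x) i * (A.mulVec y) i) - ∑ i, x i * y i| ≤ δ * (nrm x * nrm y) := by
  rcases eq_or_ne x 0 with rfl | hx
  · simp [Matrix.mulVec_zero, nrm]
  rcases eq_or_ne y 0 with rfl | hy
  · simp [Matrix.mulVec_zero, nrm]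
  have hxp := nrm_pos x hx
  have hyp := nrm_pos y hy
  set a := (nrm x)⁻¹
  set b := (nrm y)⁻¹
  have ha : 0 < a := inv_pos.2 hxp
  have hb : 0 < b := inv_pos.2 hyp
  have hcard' : (spt (a • x) ∪ spt (b • y)).card ≤ t :=
    le_trans (Finset.card_le_card (Finset.union_subset_union (spt_smul_subset a x)
      (spt_smul_subset b y))) hcard
  have hnx : nrm (a • x) = 1 := by
    rw [nrm_smul, abs_of_pos ha]; exact inv_mul_cancel₀ hxp.ne'
  have hny : nrm (b • y) = 1 := by
    rw [nrm_smul, abs_of_pos hb]; exact inv_mul_cancel₀ hyp.ne'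
  have key := rip_dot_unit hRIP (a • x) (b • y) hcard' hnx hny
  rw [Matrix.mulVec_smul, Matrix.mulVec_smul] at key
  have e1 : (∑ i, (a • A.mulVec x) i * (b • A.mulVec y) i)
      = a * b * ∑ i, (A.mulVec x) i * (A.mulVec y) i := by
    rw [Finset.mul_sum]
    exact Finset.sum_congr rfl fun i _ => by rw [Pi.smul_apply, Pi.smul_apply, smul_eq_mul, smul_eq_mul]; ring
  have e2 : (∑ i, (a • x) i * (b • y) i) = a * b * ∑ i, x i * y i := by
    rw [Finset.mul_sum]
    exact Finset.sum_congr rfl fun i _ => by rw [Pi.smul_apply, Pi.smul_apply, smul_eq_mul, smul_eq_mul]; ring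
  rw [e1, e2, ← mul_sub, abs_mul, abs_of_pos (mul_pos ha hb)] at key
  have hab : a * b = (nrm x * nrm y)⁻¹ := by rw [mul_inv]
  rw [hab] at key
  calc |(∑ i, (A.mulVec x) i * (A.mulVec y) i) - ∑ i, x i * y i|
      = (nrm x * nrm y) * ((nrm x * nrm y)⁻¹ *
        |(∑ i, (A.mulVec x) i * (A.mulVec y) i) - ∑ i, x i * y i|) := by
        field_simp
    _ ≤ (nrm x * nrm y) * δ := by
        apply mul_le_mul_of_nonneg_left key (le_of_lt (mul_pos hxp hyp))
    _ = δ * (nrm x * nrm y) := by ring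

lemma spt_restr_subset {n : ℕ} (x : Fin n → ℝ) (U : Finset (Fin n)) :
    spt (restr x U) ⊆ U := by
  intro i hi
  simp only [spt, Finset.mem_filter, Finset.mem_univ, true_and, restr] at hi
  by_contra h
  simp [h] at hi

lemma cauchy_nrm {ι : Type*} [Fintype ι] (x y : ι → ℝ) :
    |∑ i, x i * y i| ≤ nrm x * nrm y := by
  have h := Finset.sum_mul_sq_le_sq_mul_sq Finset.univ x y
  calc |∑ i, x i * y i| = Real.sqrt ((∑ i, x i * y i) ^ 2) :=
        (Real.sqrt_sq_eq_abs _).symm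
    _ ≤ Real.sqrt ((∑ i, x i ^ 2) * (∑ i, y i ^ 2)) := Real.sqrt_le_sqrt h
    _ = nrm x * nrm y := Real.sqrt_mul (Finset.sum_nonneg fun i _ => sq_nonneg _) _

theorem stmt_6 {m n : ℕ} (A : Matrix (Fin m) (Fin n) ℝ) (t : ℕ) (δ : ℝ)
    (hRIP : RIP A t δ) (μ : ℝ) (hμ : 0 < μ)
    (q : Fin n → ℝ) (U : Finset (Fin n)) (hsupp : (U ∪ spt q).card ≤ t) :
    nrm (restr (q - μ • Matrix.mulVec Aᵀ (A.mulVec q)) U) ≤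
      (|μ - 1| + μ * δ) * nrm q := by
  rcases eq_or_ne q 0 with rfl | hq
  · simp [restr, nrm, Matrix.mulVec_zero]
  have hqp : 0 < nrm q := nrm_pos q hq
  have hδ : 0 ≤ δ := by
    have hc : (spt q).card ≤ t :=
      le_trans (Finset.card_le_card Finset.subset_union_right) hsupp
    have h := hRIP q hc
    nlinarith [h.1, h.2, pow_pos hqp 2]
  set w := μ • Matrix.mulVec Aᵀ (A.mulVec q) with hw
  set v := restr (q - w) U with hvdef
  have hcardv : (spt v ∪ spt q).card ≤ t := by
    refine le_trans (Finset.card_le_card ?_) hsupp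
    exact Finset.union_subset_union (spt_restr_subset _ _) (le_refl _)
  set P := ∑ i, v i * q i with hP
  set D := ∑ j, (A.mulVec v) j * (A.mulVec q) j with hD
  have hv2 : nrm v ^ 2 = P - μ * D := by
    rw [nrm_sq]
    have step1 : ∑ i, v i ^ 2 = ∑ i, v i * (q - w) i := by
      refine Finset.sum_congr rfl fun i _ => ?_
      by_cases h : i ∈ U
      · have : v i = (q - w) i := by simp [hvdef, restr, h]
        rw [this]; ring
      · have : v i = 0 := by simp [hvdef, restr, h]
        rw [this]; ring
    have step2 : ∑ i, v i * (q - w) i = P - μ * ∑ i, v i * (Matrix.mulVec Aᵀ (A.mulVec q)) i := by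
      simp only [hP, Pi.sub_apply, hw, Pi.smul_apply, smul_eq_mul, Finset.mul_sum]
      rw [← Finset.sum_sub_distrib]
      exact Finset.sum_congr rfl fun i _ => by ring
    have step3 : ∑ i, v i * (Matrix.mulVec Aᵀ (A.mulVec q)) i = D := by
      calc ∑ i, v i * (Matrix.mulVec Aᵀ (A.mulVec q)) i
          = dotProduct v (Matrix.mulVec Aᵀ (A.mulVec q)) := rfl
        _ = dotProduct (A.mulVec v) (A.mulVec q) := by
            rw [Matrix.dotProduct_mulVec, Matrix.vecMul_transpose, dotProduct_comm]
        _ = D := rfl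
    rw [step1, step2, step3]
  have hcs : |P| ≤ nrm v * nrm q := cauchy_nrm v q
  have hrip := rip_dot hRIP v q hcardv
  have hrip' : |P - D| ≤ δ * (nrm v * nrm q) := by
    rw [abs_sub_comm]; exact hrip
  have hvq : 0 ≤ nrm v * nrm q := mul_nonneg (nrm_nonneg v) (nrm_nonneg q)
  have hle : nrm v ^ 2 ≤ (|μ - 1| + μ * δ) * (nrm v * nrm q) := by
    have e : nrm v ^ 2 = (1 - μ) * P + μ * (P - D) := by rw [hv2]; ring
    have t1 : (1 - μ) * P ≤ |μ - 1| * (nrm v * nrm q) := by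
      calc (1 - μ) * P ≤ |(1 - μ) * P| := le_abs_self _
        _ = |1 - μ| * |P| := abs_mul _ _
        _ ≤ |1 - μ| * (nrm v * nrm q) :=
            mul_le_mul_of_nonneg_left hcs (abs_nonneg _)
        _ = |μ - 1| * (nrm v * nrm q) := by rw [abs_sub_comm]
    have t2 : μ * (P - D) ≤ μ * (δ * (nrm v * nrm q)) := by
      refine mul_le_mul_of_nonneg_left ?_ hμ.le
      exact le_trans (le_abs_self _) hrip'
    rw [e]; nlinarith [t1, t2]
  rcases eq_or_lt_of_le (nrm_nonneg v) with h0 | hvp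
  · rw [← h0]
    positivity
  · nlinarith [hle, hvp, hqp]
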